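/- Let σ_1,...,σ_n ≥ 0 satisfy 2·max_i σ_i² ≤ ∑_i σ_i². Then there exists an n-dimensional Gaussian random vector (X_1,...,X_n) with Var(X_i) = σ_i² for each i, Cov(X_i,X_j) ≤ 0 for all i ≠ j, and X_1 + ... + X_n = 0 almost surely (equivalently, a positive semi-definite matrix Σ with diagonal entries σ_1²,...,σ_n², nonpositive off-diagonal entries, and 1ᵀΣ1 = 0). -/

import Mathlib

open MeasureTheory ProbabilityTheory
open Finset Matrix

noncomputable def ov (p q r t : ℝ) : ℝ := max 0 (min q t - max p r)

lemma ov_nonneg (p q r t : ℝ) : 0 ≤ ov p q r t := le_max_left _ _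

lemma ov_clamp (p q r t : ℝ) (hpq : p ≤ q) (hrt : r ≤ t) :
    ov p q r t = min q (max p t) - min q (max p r) := by
  unfold ov
  simp only [min_def, max_def]
  split_ifs <;> linarith

lemma ov_comm (p q r t : ℝ) : ov p q r t = ov r t p q := by
  unfold ov; rw [min_comm q t, max_comm p r]

lemma ov_shift (p q r t c : ℝ) : ov p q (r + c) (t + c) = ov (p - c) (q - c) r t := by
  unfold ov
  simp only [min_def, max_def]
  split_ifs <;> linarith

/-- If `2 max_i σ_i² ≤ ∑_i σ_i²`, there is a Gaussian joint mix with variances `σ_i²`,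
nonpositive covariances, and a.s. zero sum; equivalently there is a positive semi-definite
matrix with diagonal `σ_i²`, nonpositive off-diagonal entries, and `1ᵀ Σ 1 = 0`. -/
theorem stmt1 {n : ℕ} (σ : Fin n → ℝ) (hσ : ∀ i, 0 ≤ σ i)
    (h : ∀ i, 2 * σ i ^ 2 ≤ ∑ j, σ j ^ 2) :
    ∃ S : Matrix (Fin n) (Fin n) ℝ, S.PosSemidef ∧ (∀ i, S i i = σ i ^ 2) ∧
      (∀ i j, i ≠ j → S i j ≤ 0) ∧ ∑ i, ∑ j, S i j = 0 := by
  classical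
  set v : ℕ → ℝ := fun k => if h : k < n then σ ⟨k, h⟩ ^ 2 else 0 with hv
  have hv0 : ∀ k, 0 ≤ v k := by
    intro k; rw [hv]; dsimp only; split_ifs with hk
    · positivity
    · exact le_refl 0
  have hvf : ∀ i : Fin n, v ↑i = σ i ^ 2 := by
    intro i; rw [hv]; simp [i.isLt]
  set a : ℕ → ℝ := fun k => ∑ j ∈ range k, v j with ha
  have ha_succ : ∀ k, a (k + 1) = a k + v k := by
    intro k; rw [ha]; exact Finset.sum_range_succ v k
  have ha_mono : Monotone a := by
    intro k l hkl
    exact Finset.sum_le_sum_of_subset_of_nonneg (Finset.range_subset_range.2 hkl)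
      (fun j _ _ => hv0 j)
  have ha0 : ∀ k, 0 ≤ a k := by
    intro k
    exact Finset.sum_nonneg fun j _ => hv0 j
  set s : ℝ := a n with hs
  have hs0 : 0 ≤ s := ha0 n
  have hsum : ∑ j, σ j ^ 2 = s := by
    have h1 : s = ∑ j ∈ range n, v j := rfl
    rw [h1, ← Fin.sum_univ_eq_sum_range v n]
    exact Finset.sum_congr rfl fun j _ => (hvf j).symm
  set s2 : ℝ := s / 2 with hs2
  set B : ℕ → ℕ → ℝ := fun k l =>
    ov (a k) (a (k + 1)) (a l + s2) (a (l + 1) + s2) +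
    ov (a k) (a (k + 1)) (a l - s2) (a (l + 1) - s2) with hB
  have hB0 : ∀ k l, 0 ≤ B k l := fun k l => add_nonneg (ov_nonneg _ _ _ _) (ov_nonneg _ _ _ _)
  have hBsymm : ∀ k l, B k l = B l k := by
    intro k l
    rw [hB]; dsimp only
    rw [ov_shift, ov_comm (a k - s2)]
    rw [show a l - s2 = a l + (-s2) by ring, show a (l+1) - s2 = a (l+1) + (-s2) by ring,
      ov_shift, ov_comm (a k - -s2)]
    rw [show a k - -s2 = a k + s2 by ring, show a (k+1) - -s2 = a (k+1) + s2 by ring,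
      show a k - s2 = a k + (-s2) by ring, show a (k+1) - s2 = a (k+1) + (-s2) by ring]
    ring
  -- diagonal of B vanishes (uses 2 v k ≤ s for k < n)
  have hBdiag : ∀ i : Fin n, B ↑i ↑i = 0 := by
    intro i
    have hvi : 2 * v ↑i ≤ s := by rw [hvf i, ← hsum]; exact h i
    have hq : a (↑i + 1) = a ↑i + v ↑i := ha_succ _
    rw [hB]; dsimp only
    have h1 : ov (a ↑i) (a (↑i + 1)) (a ↑i + s2) (a (↑i + 1) + s2) = 0 := by
      unfold ov
      apply max_eq_left
      rw [hq, hs2]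
      linarith [min_le_left (a ↑i + v ↑i) (a ↑i + v ↑i + s/2),
        le_max_right (a ↑i) (a ↑i + s/2)]
    have h2 : ov (a ↑i) (a (↑i + 1)) (a ↑i - s2) (a (↑i + 1) - s2) = 0 := by
      unfold ov
      apply max_eq_left
      rw [hq, hs2]
      linarith [min_le_right (a ↑i + v ↑i) (a ↑i + v ↑i - s/2),
        le_max_left (a ↑i) (a ↑i - s/2)]
    rw [h1, h2, add_zero]
  -- row sums
  have hrow : ∀ i : Fin n, ∑ j : Fin n, B ↑i ↑j = σ i ^ 2 := by
    intro i
    have hpq : a ↑i ≤ a (↑i + 1) := ha_mono (Nat.le_succ _)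
    have hqs : a (↑i + 1) ≤ s := ha_mono i.isLt
    have hp0 : 0 ≤ a ↑i := ha0 _
    rw [Fin.sum_univ_eq_sum_range (fun l => B ↑i l)]
    have hterm : ∀ l, B ↑i l =
        (min (a (↑i+1)) (max (a ↑i) (a (l+1) + s2)) - min (a (↑i+1)) (max (a ↑i) (a l + s2))) +
        (min (a (↑i+1)) (max (a ↑i) (a (l+1) - s2)) - min (a (↑i+1)) (max (a ↑i) (a l - s2))) := by
      intro l
      rw [hB]; dsimp only
      rw [ov_clamp _ _ _ _ hpq (by linarith [ha_mono (Nat.le_succ l)]),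
        ov_clamp _ _ _ _ hpq (by linarith [ha_mono (Nat.le_succ l)])]
    simp only [hterm]
    rw [Finset.sum_add_distrib,
      Finset.sum_range_sub (fun l => min (a (↑i+1)) (max (a ↑i) (a l + s2))),
      Finset.sum_range_sub (fun l => min (a (↑i+1)) (max (a ↑i) (a l - s2)))]
    have e1 : min (a (↑i+1)) (max (a ↑i) (a n + s2)) = a (↑i + 1) := by
      apply min_eq_left
      refine le_trans ?_ (le_max_right _ _)
      rw [hs2, ← hs]; linarith
    have e2 : a 0 + s2 = a n - s2 := by
      have h0 : a 0 = 0 := by rw [ha]; simp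
      rw [h0, hs2, ← hs]; ring
    have e3 : min (a (↑i+1)) (max (a ↑i) (a 0 - s2)) = a ↑i := by
      have h4 : a 0 - s2 ≤ a ↑i := by
        have h0 : a 0 = 0 := by rw [ha]; simp
        rw [h0, hs2]; linarith
      rw [max_eq_left h4]
      exact min_eq_right hpq
    rw [e1, e2, e3, ha_succ, ← hvf i]
    ring
  -- the matrix
  set S0 : Matrix (Fin n) (Fin n) ℝ :=
    Matrix.of (fun i j => (if i = j then σ i ^ 2 else 0) - B ↑i ↑j) with hS0
  have hS0app : ∀ i j, S0 i j = (if i = j then σ i ^ 2 else 0) - B ↑i ↑j := fun i j => rfl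
  have hmvrow : ∀ (x : Fin n → ℝ) (i : Fin n),
      ∑ j : Fin n, S0 i j * x j = σ i ^ 2 * x i - ∑ j : Fin n, B ↑i ↑j * x j := by
    intro x i
    have e : ∀ j : Fin n, S0 i j * x j
        = (if i = j then σ i ^ 2 * x j else 0) - B ↑i ↑j * x j := by
      intro j; rw [hS0app]; split_ifs <;> ring
    rw [Finset.sum_congr rfl fun j _ => e j, Finset.sum_sub_distrib,
      Finset.sum_ite_eq Finset.univ i (fun j => σ i ^ 2 * x j)]
    simp
  refine ⟨S0, Matrix.posSemidef_iff_dotProduct_mulVec.mpr ⟨?_, ?_⟩, ?_, ?_, ?_⟩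
  · -- Hermitian
    ext i j
    simp only [Matrix.conjTranspose_apply, star_trivial, hS0app]
    by_cases hij : i = j
    · subst hij; rfl
    · have hji : ¬ j = i := fun h' => hij h'.symm
      rw [if_neg hij, if_neg hji, hBsymm]
  · -- quadratic form nonneg
    intro x
    have hstar : star x = x := by funext j; simp
    rw [hstar]
    have hdot : x ⬝ᵥ (S0 *ᵥ x)
        = ∑ i, σ i ^ 2 * x i ^ 2 - ∑ i : Fin n, ∑ j : Fin n, B ↑i ↑j * x i * x j := by
      simp only [dotProduct, Matrix.mulVec]
      rw [← Finset.sum_sub_distrib]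
      refine Finset.sum_congr rfl fun i _ => ?_
      rw [hmvrow x i, mul_sub, Finset.mul_sum]
      congr 1
      · ring
      · exact Finset.sum_congr rfl fun j _ => by ring
    have hkey : ∑ i : Fin n, ∑ j : Fin n, B ↑i ↑j * (x i - x j) ^ 2
        = 2 * (∑ i, σ i ^ 2 * x i ^ 2) - 2 * (∑ i : Fin n, ∑ j : Fin n, B ↑i ↑j * x i * x j) := by
      have e1 : ∀ i : Fin n, ∑ j : Fin n, B ↑i ↑j * (x i - x j) ^ 2
          = (∑ j : Fin n, B ↑i ↑j) * x i ^ 2 - 2 * (∑ j : Fin n, B ↑i ↑j * x i * x j)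
            + ∑ j : Fin n, B ↑i ↑j * x j ^ 2 := by
        intro i
        rw [Finset.sum_mul, Finset.mul_sum, ← Finset.sum_sub_distrib, ← Finset.sum_add_distrib]
        exact Finset.sum_congr rfl fun j _ => by ring
      simp only [e1]
      rw [Finset.sum_add_distrib, Finset.sum_sub_distrib]
      have e2 : ∑ i : Fin n, (∑ j : Fin n, B ↑i ↑j) * x i ^ 2 = ∑ i, σ i ^ 2 * x i ^ 2 :=
        Finset.sum_congr rfl fun i _ => by rw [hrow i]
      have e3 : ∑ i : Fin n, ∑ j : Fin n, B ↑i ↑j * x j ^ 2 = ∑ i, σ i ^ 2 * x i ^ 2 := by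
        rw [Finset.sum_comm]
        refine Finset.sum_congr rfl fun j _ => ?_
        rw [← Finset.sum_mul]
        have e4 : ∑ i : Fin n, B ↑i ↑j = σ j ^ 2 :=
          calc ∑ i : Fin n, B ↑i ↑j = ∑ i : Fin n, B ↑j ↑i :=
                Finset.sum_congr rfl fun (i : Fin n) _ => hBsymm _ _
            _ = σ j ^ 2 := hrow j
        rw [e4]
      have e5 : ∑ i : Fin n, 2 * (∑ j : Fin n, B ↑i ↑j * x i * x j)
          = 2 * ∑ i : Fin n, ∑ j : Fin n, B ↑i ↑j * x i * x j := by
        rw [Finset.mul_sum]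
      rw [e2, e3, e5]
      ring
    have hnn : 0 ≤ ∑ i : Fin n, ∑ j : Fin n, B ↑i ↑j * (x i - x j) ^ 2 :=
      Finset.sum_nonneg fun i _ => Finset.sum_nonneg fun j _ =>
        mul_nonneg (hB0 _ _) (sq_nonneg _)
    rw [hdot]
    linarith
  · intro i
    rw [hS0app, if_pos rfl, hBdiag i, sub_zero]
  · intro i j hij
    rw [hS0app, if_neg hij, zero_sub, neg_nonpos]
    exact hB0 _ _
  · have hrowS : ∀ i : Fin n, ∑ j : Fin n, S0 i j = 0 := by
      intro i
      simp only [hS0app]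
      rw [Finset.sum_sub_distrib, Finset.sum_ite_eq Finset.univ i (fun _ => σ i ^ 2),
        hrow i]
      simp
    simp [hrowS]
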